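/- Let t ∈ ℝ and assume (κ1 t)^2 + (κ2 t)^2 ≠ 0. Then the torsion of γ at t, τ t = det(deriv γ t, iteratedDeriv 2 γ t, iteratedDeriv 3 γ t) / ‖iteratedDeriv 2 γ t‖^2, satisfies τ t = κ3 t + (κ1 t · deriv κ2 t − κ2 t · deriv κ1 t)/((κ1 t)^2 + (κ2 t)^2). Equivalently, det(deriv γ t, iteratedDeriv 2 γ t, iteratedDeriv 3 γ t) = ((κ1 t)^2 + (κ2 t)^2) · κ3 t + κ1 t · deriv κ2 t − κ2 t · deriv κ1 t. -/

import Mathlib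

open scoped RealInnerProductSpace

noncomputable def cross3 (u v : EuclideanSpace ℝ (Fin 3)) : EuclideanSpace ℝ (Fin 3) :=
  (WithLp.equiv 2 (Fin 3 → ℝ)).symm
    ![u 1 * v 2 - u 2 * v 1, u 2 * v 0 - u 0 * v 2, u 0 * v 1 - u 1 * v 0]

noncomputable def det3 (u v w : EuclideanSpace ℝ (Fin 3)) : ℝ :=
  Matrix.det (Matrix.of (fun i j => ![u, v, w] j i))

lemma normsq3 (u : EuclideanSpace ℝ (Fin 3)) : u 0 ^ 2 + u 1 ^ 2 + u 2 ^ 2 = ‖u‖ ^ 2 := by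
  rw [← real_inner_self_eq_norm_sq]
  simp only [PiLp.inner_apply, Fin.sum_univ_three, RCLike.inner_apply, conj_trivial]
  ring

theorem stmt1
    (γ e1 e2 e3 : ℝ → EuclideanSpace ℝ (Fin 3)) (κ1 κ2 κ3 : ℝ → ℝ)
    (hγ : ContDiff ℝ (⊤ : ℕ∞) γ)
    (he1s : ContDiff ℝ (⊤ : ℕ∞) e1) (he2s : ContDiff ℝ (⊤ : ℕ∞) e2)
    (he3s : ContDiff ℝ (⊤ : ℕ∞) e3)
    (hκ1s : ContDiff ℝ (⊤ : ℕ∞) κ1) (hκ2s : ContDiff ℝ (⊤ : ℕ∞) κ2)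
    (hκ3s : ContDiff ℝ (⊤ : ℕ∞) κ3)
    (he1 : e1 = deriv γ)
    (hON : ∀ t, Orthonormal ℝ ![e1 t, e2 t, e3 t])
    (hor : ∀ t, e3 t = cross3 (e1 t) (e2 t))
    (hE1 : ∀ t, deriv e1 t = κ1 t • e2 t + κ2 t • e3 t)
    (hE2 : ∀ t, deriv e2 t = (-(κ1 t)) • e1 t + κ3 t • e3 t)
    (hE3 : ∀ t, deriv e3 t = (-(κ2 t)) • e1 t - κ3 t • e2 t)
    (t : ℝ) (hne : (κ1 t)^2 + (κ2 t)^2 ≠ 0) :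
    det3 (deriv γ t) (iteratedDeriv 2 γ t) (iteratedDeriv 3 γ t) / ‖iteratedDeriv 2 γ t‖^2
      = κ3 t + (κ1 t * deriv κ2 t - κ2 t * deriv κ1 t) / ((κ1 t)^2 + (κ2 t)^2)
    ∧ det3 (deriv γ t) (iteratedDeriv 2 γ t) (iteratedDeriv 3 γ t)
      = ((κ1 t)^2 + (κ2 t)^2) * κ3 t + κ1 t * deriv κ2 t - κ2 t * deriv κ1 t := by
  have dk1 : Differentiable ℝ κ1 := hκ1s.differentiable (by simp)
  have dk2 : Differentiable ℝ κ2 := hκ2s.differentiable (by simp)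
  have de2 : Differentiable ℝ e2 := he2s.differentiable (by simp)
  have de3 : Differentiable ℝ e3 := he3s.differentiable (by simp)
  -- second derivative
  have h2 : ∀ s, iteratedDeriv 2 γ s = κ1 s • e2 s + κ2 s • e3 s := by
    intro s
    show iteratedDeriv (1+1) γ s = _
    rw [iteratedDeriv_succ, iteratedDeriv_one, ← he1, hE1]
  have h2f : iteratedDeriv 2 γ = fun s => κ1 s • e2 s + κ2 s • e3 s := funext h2
  -- third derivative
  have h3 : iteratedDeriv 3 γ t
      = (-(κ1 t ^ 2 + κ2 t ^ 2)) • e1 t + (deriv κ1 t - κ2 t * κ3 t) • e2 t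
        + (deriv κ2 t + κ1 t * κ3 t) • e3 t := by
    show iteratedDeriv (2+1) γ t = _
    rw [iteratedDeriv_succ, h2f]
    rw [deriv_fun_add ((dk1 t).fun_smul (de2 t)) ((dk2 t).fun_smul (de3 t)),
      deriv_fun_smul (dk1 t) (de2 t), deriv_fun_smul (dk2 t) (de3 t), hE2, hE3]
    ext i
    fin_cases i <;>
      simp [PiLp.add_apply, PiLp.smul_apply, PiLp.sub_apply, smul_eq_mul] <;> ring
  -- orthonormality facts in components
  have o := hON t
  have hx : e1 t 0 ^ 2 + e1 t 1 ^ 2 + e1 t 2 ^ 2 = 1 := by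
    rw [normsq3]; have := o.1 0; simp at this; rw [this]; norm_num
  have hy : e2 t 0 ^ 2 + e2 t 1 ^ 2 + e2 t 2 ^ 2 = 1 := by
    rw [normsq3]; have := o.1 1; simp at this; rw [this]; norm_num
  have hz : e3 t 0 ^ 2 + e3 t 1 ^ 2 + e3 t 2 ^ 2 = 1 := by
    rw [normsq3]; have := o.1 2; simp at this; rw [this]; norm_num
  have hxy : e1 t 0 * e2 t 0 + e1 t 1 * e2 t 1 + e1 t 2 * e2 t 2 = 0 := by
    have := o.2 (i := 0) (j := 1) (by decide)
    simp [PiLp.inner_apply, Fin.sum_univ_three] at this; linear_combination this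
  have hyz : e2 t 0 * e3 t 0 + e2 t 1 * e3 t 1 + e2 t 2 * e3 t 2 = 0 := by
    have := o.2 (i := 1) (j := 2) (by decide)
    simp [PiLp.inner_apply, Fin.sum_univ_three] at this; linear_combination this
  -- norm of second derivative
  have hnorm : ‖iteratedDeriv 2 γ t‖ ^ 2 = κ1 t ^ 2 + κ2 t ^ 2 := by
    rw [← normsq3, h2 t]
    simp only [PiLp.add_apply, PiLp.smul_apply, smul_eq_mul]
    linear_combination (κ1 t)^2 * hy + (κ2 t)^2 * hz + (2 * κ1 t * κ2 t) * hyz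
  -- the determinant
  have key : det3 (e1 t) (iteratedDeriv 2 γ t) (iteratedDeriv 3 γ t)
      = ((κ1 t)^2 + (κ2 t)^2) * κ3 t + κ1 t * deriv κ2 t - κ2 t * deriv κ1 t := by
    rw [h2 t, h3, hor t]
    simp only [det3, cross3, Matrix.det_fin_three, Matrix.of_apply, Matrix.cons_val',
      Matrix.cons_val_zero, Matrix.cons_val_one, Matrix.head_cons, Matrix.empty_val',
      Matrix.cons_val_fin_one, Matrix.head_fin_const, PiLp.add_apply, PiLp.smul_apply,
      smul_eq_mul, WithLp.equiv_symm_apply, PiLp.toLp_apply, Matrix.cons_val_two, Matrix.tail_cons]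
    set K := ((κ1 t)^2 + (κ2 t)^2) * κ3 t + κ1 t * deriv κ2 t - κ2 t * deriv κ1 t with hK
    set Sy := e2 t 0 ^ 2 + e2 t 1 ^ 2 + e2 t 2 ^ 2
    set P := e1 t 0 * e2 t 0 + e1 t 1 * e2 t 1 + e1 t 2 * e2 t 2
    linear_combination (K * Sy) * hx + K * hy - (K * P) * hxy
  rw [he1] at key
  refine ⟨?_, key⟩
  rw [key, hnorm]
  field_simp
  ring
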